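/- Let C be a linear code of length n over R with associated ternary codes C₁, C₂, C₃, so that C = (1+2v²)C₁ ⊕ (2v+2v²)C₂ ⊕ (v+2v²)C₃. Then the Euclidean dual satisfies C^⊥ = (1+2v²)C₁^⊥ ⊕ (2v+2v²)C₂^⊥ ⊕ (v+2v²)C₃^⊥. Furthermore, C is self-dual if and only if C₁, C₂ and C₃ are self-dual ternary codes. -/

import Mathlib

/-- The ring `R = Z₃ + vZ₃ + v²Z₃ = Z₃[v]/(v³ - v)`, with elements written
`a + v*b + v²*c` for `a b c : ZMod 3` (stored as the three coordinates). -/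
@[ext]
structure R3 : Type where
  a : ZMod 3
  b : ZMod 3
  c : ZMod 3
  deriving DecidableEq

namespace R3

instance : Zero R3 := ⟨⟨0, 0, 0⟩⟩
instance : One R3 := ⟨⟨1, 0, 0⟩⟩
instance : Add R3 := ⟨fun x y => ⟨x.a + y.a, x.b + y.b, x.c + y.c⟩⟩
instance : Neg R3 := ⟨fun x => ⟨-x.a, -x.b, -x.c⟩⟩
/-- Multiplication induced by `v³ = v` :
`(a+vb+v²c)(a'+vb'+v²c') = aa' + v(ab'+a'b+bc'+b'c) + v²(ac'+a'c+bb'+cc')`. -/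
instance : Mul R3 := ⟨fun x y =>
  ⟨x.a * y.a,
   x.a * y.b + x.b * y.a + x.b * y.c + x.c * y.b,
   x.a * y.c + x.c * y.a + x.b * y.b + x.c * y.c⟩⟩

@[simp] lemma zero_a : (0 : R3).a = 0 := rfl
@[simp] lemma zero_b : (0 : R3).b = 0 := rfl
@[simp] lemma zero_c : (0 : R3).c = 0 := rfl
@[simp] lemma one_a : (1 : R3).a = 1 := rfl
@[simp] lemma one_b : (1 : R3).b = 0 := rfl
@[simp] lemma one_c : (1 : R3).c = 0 := rfl
@[simp] lemma add_a (x y : R3) : (x + y).a = x.a + y.a := rfl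
@[simp] lemma add_b (x y : R3) : (x + y).b = x.b + y.b := rfl
@[simp] lemma add_c (x y : R3) : (x + y).c = x.c + y.c := rfl
@[simp] lemma neg_a (x : R3) : (-x).a = -x.a := rfl
@[simp] lemma neg_b (x : R3) : (-x).b = -x.b := rfl
@[simp] lemma neg_c (x : R3) : (-x).c = -x.c := rfl
@[simp] lemma mul_a (x y : R3) : (x * y).a = x.a * y.a := rfl
@[simp] lemma mul_b (x y : R3) :
    (x * y).b = x.a * y.b + x.b * y.a + x.b * y.c + x.c * y.b := rfl
@[simp] lemma mul_c (x y : R3) :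
    (x * y).c = x.a * y.c + x.c * y.a + x.b * y.b + x.c * y.c := rfl

private lemma thm_add_assoc (x y z : R3) : x + y + z = x + (y + z) := by ext <;> simp <;> ring
private lemma thm_zero_add (x : R3) : 0 + x = x := by ext <;> simp
private lemma thm_add_zero (x : R3) : x + 0 = x := by ext <;> simp
private lemma thm_add_comm (x y : R3) : x + y = y + x := by ext <;> simp <;> ring
private lemma thm_mul_assoc (x y z : R3) : x * y * z = x * (y * z) := by ext <;> simp <;> ring
private lemma thm_one_mul (x : R3) : 1 * x = x := by ext <;> simp
private lemma thm_mul_one (x : R3) : x * 1 = x := by ext <;> simp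
private lemma thm_left_distrib (x y z : R3) : x * (y + z) = x * y + x * z := by ext <;> simp <;> ring
private lemma thm_right_distrib (x y z : R3) : (x + y) * z = x * z + y * z := by ext <;> simp <;> ring
private lemma thm_mul_comm (x y : R3) : x * y = y * x := by ext <;> simp <;> ring
private lemma thm_zero_mul (x : R3) : 0 * x = 0 := by ext <;> simp
private lemma thm_mul_zero (x : R3) : x * 0 = 0 := by ext <;> simp
private lemma thm_neg_add_cancel (x : R3) : -x + x = 0 := by ext <;> simp

instance : CommRing R3 where
  nsmul m x := ⟨m • x.a, m • x.b, m • x.c⟩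
  nsmul_zero x := R3.ext (zero_nsmul x.a) (zero_nsmul x.b) (zero_nsmul x.c)
  nsmul_succ m x := R3.ext (succ_nsmul x.a m) (succ_nsmul x.b m) (succ_nsmul x.c m)
  zsmul m x := ⟨m • x.a, m • x.b, m • x.c⟩
  zsmul_zero' x := R3.ext (zero_zsmul x.a) (zero_zsmul x.b) (zero_zsmul x.c)
  zsmul_succ' m x := R3.ext (SubNegMonoid.zsmul_succ' m x.a) (SubNegMonoid.zsmul_succ' m x.b)
    (SubNegMonoid.zsmul_succ' m x.c)
  zsmul_neg' m x := R3.ext (SubNegMonoid.zsmul_neg' m x.a) (SubNegMonoid.zsmul_neg' m x.b)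
    (SubNegMonoid.zsmul_neg' m x.c)
  add_assoc := thm_add_assoc
  zero_add := thm_zero_add
  add_zero := thm_add_zero
  add_comm := thm_add_comm
  mul_assoc := thm_mul_assoc
  one_mul := thm_one_mul
  mul_one := thm_mul_one
  left_distrib := thm_left_distrib
  right_distrib := thm_right_distrib
  mul_comm := thm_mul_comm
  zero_mul := thm_zero_mul
  mul_zero := thm_mul_zero
  neg_add_cancel := thm_neg_add_cancel

/-- The element `v` of `R = Z₃[v]/(v³-v)`. -/
def v : R3 := ⟨0, 1, 0⟩

/-- The natural inclusion `Z₃ → R`. -/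
def iota : ZMod 3 →+* R3 where
  toFun t := ⟨t, 0, 0⟩
  map_one' := by ext <;> simp
  map_mul' x y := by ext <;> simp
  map_zero' := by ext <;> simp
  map_add' x y := by ext <;> simp

instance : Algebra (ZMod 3) R3 := iota.toAlgebra

end R3

open R3 in
/-- The Gray map `φ : R → Z₃³`, `φ(a+vb+v²c) = (a, a+b+c, a+2b+c)`. -/
def gray (r : R3) : ZMod 3 × ZMod 3 × ZMod 3 :=
  (r.a, r.a + r.b + r.c, r.a + 2 * r.b + r.c)

/-- The Gray map extended blockwise to `φ : R^n → Z₃^{3n}`, where `Z₃^{3n}` is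
identified with `Z₃^n × Z₃^n × Z₃^n` via the three length-`n` blocks. -/
def grayV {n : ℕ} (r : Fin n → R3) :
    (Fin n → ZMod 3) × (Fin n → ZMod 3) × (Fin n → ZMod 3) :=
  (fun i => (r i).a,
   fun i => (r i).a + (r i).b + (r i).c,
   fun i => (r i).a + 2 * (r i).b + (r i).c)

/-- Hamming weight on `Z₃^{3n} = Z₃^n × Z₃^n × Z₃^n`. -/
def wtH {n : ℕ} (x : (Fin n → ZMod 3) × (Fin n → ZMod 3) × (Fin n → ZMod 3)) : ℕ :=
  hammingNorm x.1 + hammingNorm x.2.1 + hammingNorm x.2.2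

/-- The Lee weight of an element of `R`: the Hamming weight of its Gray image. -/
def wtLee (r : R3) : ℕ :=
  (if r.a ≠ 0 then 1 else 0) + (if r.a + r.b + r.c ≠ 0 then 1 else 0) +
    (if r.a + 2 * r.b + r.c ≠ 0 then 1 else 0)

/-- The Lee weight on `R^n`, extended additively. -/
def wtLeeV {n : ℕ} (x : Fin n → R3) : ℕ := ∑ i, wtLee (x i)

/-- The cyclic shift `σ(c₀,…,c_{n-1}) = (c_{n-1},c₀,…,c_{n-2})`. -/
def cyc {α : Type*} {n : ℕ} [NeZero n] (c : Fin n → α) : Fin n → α :=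
  fun i => c (i - 1)

/-- The negacyclic shift `η(c₀,…,c_{n-1}) = (-c_{n-1},c₀,…,c_{n-2})`. -/
def nega {α : Type*} [Neg α] {n : ℕ} [NeZero n] (c : Fin n → α) : Fin n → α :=
  fun i => if i = 0 then -c (i - 1) else c (i - 1)

/-- The `λ`-constacyclic shift `(c₀,…,c_{n-1}) ↦ (λc_{n-1},c₀,…,c_{n-2})`. -/
def consta {α : Type*} [Mul α] {n : ℕ} [NeZero n] (lam : α) (c : Fin n → α) : Fin n → α :=
  fun i => if i = 0 then lam * c (i - 1) else c (i - 1)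

/-- The quasi-cyclic shift `τ_{s,l}` of block length `l` on vectors of length `n = s*l`,
moving the last block of `l` coordinates to the front; equivalently, the cyclic shift
by `l` positions. -/
def shiftBy {α : Type*} {n : ℕ} [NeZero n] (l : ℕ) (c : Fin n → α) : Fin n → α :=
  fun i => c (i - Fin.ofNat n l)

/-- Apply a map to each of the three blocks of `Z₃^{3n} = Z₃^n × Z₃^n × Z₃^n`. -/
def blockMap {n : ℕ} (f : (Fin n → ZMod 3) → (Fin n → ZMod 3))
    (x : (Fin n → ZMod 3) × (Fin n → ZMod 3) × (Fin n → ZMod 3)) :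
    (Fin n → ZMod 3) × (Fin n → ZMod 3) × (Fin n → ZMod 3) :=
  (f x.1, f x.2.1, f x.2.2)

/-- The Euclidean dual of a linear code over `R`. -/
def dualR {n : ℕ} (C : Submodule R3 (Fin n → R3)) : Submodule R3 (Fin n → R3) where
  carrier := {x | ∀ y ∈ C, ∑ i, x i * y i = 0}
  add_mem' := by
    intro p q hp hq y hy
    simp only [Set.mem_setOf_eq] at *
    simp [Pi.add_apply, add_mul, Finset.sum_add_distrib, hp y hy, hq y hy]
  zero_mem' := by intro y hy; simp
  smul_mem' := by
    intro r p hp y hy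
    simp only [Set.mem_setOf_eq] at *
    simp [Pi.smul_apply, smul_eq_mul, mul_assoc, ← Finset.mul_sum, hp y hy]

/-- The Euclidean dual of a ternary linear code. -/
def dualZ {n : ℕ} (C : Submodule (ZMod 3) (Fin n → ZMod 3)) :
    Submodule (ZMod 3) (Fin n → ZMod 3) where
  carrier := {x | ∀ y ∈ C, ∑ i, x i * y i = 0}
  add_mem' := by
    intro p q hp hq y hy
    simp only [Set.mem_setOf_eq] at *
    simp [Pi.add_apply, add_mul, Finset.sum_add_distrib, hp y hy, hq y hy]
  zero_mem' := by intro y hy; simp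
  smul_mem' := by
    intro r p hp y hy
    simp only [Set.mem_setOf_eq] at *
    simp [Pi.smul_apply, smul_eq_mul, mul_assoc, ← Finset.mul_sum, hp y hy]

/-- The Euclidean inner product on `Z₃^{3n} = Z₃^n × Z₃^n × Z₃^n`. -/
def inner3 {n : ℕ} (x y : (Fin n → ZMod 3) × (Fin n → ZMod 3) × (Fin n → ZMod 3)) : ZMod 3 :=
  ∑ i, x.1 i * y.1 i + ∑ i, x.2.1 i * y.2.1 i + ∑ i, x.2.2 i * y.2.2 i

/-- The Euclidean dual (as a set) of a subset of `Z₃^{3n}`. -/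
def dual3Set {n : ℕ} (S : Set ((Fin n → ZMod 3) × (Fin n → ZMod 3) × (Fin n → ZMod 3))) :
    Set ((Fin n → ZMod 3) × (Fin n → ZMod 3) × (Fin n → ZMod 3)) :=
  {x | ∀ y ∈ S, inner3 x y = 0}

/-- The first associated ternary code `C₁ = {a : ∃ b c, a+vb+v²c ∈ C}`. -/
def assoc1 {n : ℕ} (C : Set (Fin n → R3)) : Set (Fin n → ZMod 3) :=
  {x | ∃ r ∈ C, ∀ i, x i = (r i).a}

/-- The second associated ternary code `C₂ = {a+b+c : a+vb+v²c ∈ C}`. -/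
def assoc2 {n : ℕ} (C : Set (Fin n → R3)) : Set (Fin n → ZMod 3) :=
  {x | ∃ r ∈ C, ∀ i, x i = (r i).a + (r i).b + (r i).c}

/-- The third associated ternary code `C₃ = {a+2b+c : a+vb+v²c ∈ C}`. -/
def assoc3 {n : ℕ} (C : Set (Fin n → R3)) : Set (Fin n → ZMod 3) :=
  {x | ∃ r ∈ C, ∀ i, x i = (r i).a + 2 * (r i).b + (r i).c}

/-- The idempotent `e₁ = 1 + 2v²` of `R`. -/
noncomputable def e1 : R3 := 1 + 2 * R3.v ^ 2
/-- The idempotent `e₂ = 2v + 2v²` of `R`. -/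
noncomputable def e2 : R3 := 2 * R3.v + 2 * R3.v ^ 2
/-- The idempotent `e₃ = v + 2v²` of `R`. -/
noncomputable def e3 : R3 := R3.v + 2 * R3.v ^ 2

/-- Coordinatewise inclusion `Z₃^n → R^n`. -/
def emb {n : ℕ} (x : Fin n → ZMod 3) : Fin n → R3 := fun i => R3.iota (x i)

/-- The code `(1+2v²)C₁ ⊕ (2v+2v²)C₂ ⊕ (v+2v²)C₃ ⊆ R^n` built from three
ternary codes `C₁, C₂, C₃ ⊆ Z₃^n`. -/
def tri {n : ℕ} (C₁ C₂ C₃ : Set (Fin n → ZMod 3)) : Set (Fin n → R3) :=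
  {w | ∃ x ∈ C₁, ∃ y ∈ C₂, ∃ z ∈ C₃, w = e1 • emb x + e2 • emb y + e3 • emb z}

open Polynomial in
/-- The polynomial representation `(c₀,…,c_{n-1}) ↦ c₀ + c₁x + … + c_{n-1}x^{n-1}`
of a vector over `Z₃`. -/
noncomputable def toPolyZ {n : ℕ} (c : Fin n → ZMod 3) : Polynomial (ZMod 3) :=
  ∑ i : Fin n, Polynomial.C (c i) * Polynomial.X ^ (i : ℕ)

open Polynomial in
/-- The polynomial representation of a vector over `R`. -/
noncomputable def toPolyR {n : ℕ} (c : Fin n → R3) : Polynomial R3 :=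
  ∑ i : Fin n, Polynomial.C (c i) * Polynomial.X ^ (i : ℕ)

/-- The quotient map `Z₃[x] → Z₃[x]/(xⁿ - ε)`. -/
noncomputable def mkZ (n : ℕ) (ε : ZMod 3) :
    Polynomial (ZMod 3) →+*
      Polynomial (ZMod 3) ⧸ Ideal.span {Polynomial.X ^ n - Polynomial.C ε} :=
  Ideal.Quotient.mk _

/-- The quotient map `R[x] → R[x]/(xⁿ - ε)`. -/
noncomputable def mkR (n : ℕ) (ε : R3) :
    Polynomial R3 →+* Polynomial R3 ⧸ Ideal.span {Polynomial.X ^ n - Polynomial.C ε} :=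
  Ideal.Quotient.mk _

/-- `f` is the generator polynomial of the ternary cyclic (`ε = 1`) resp. negacyclic
(`ε = -1`) code `D` of length `n`: `f` is a monic divisor of `xⁿ - ε` and, under the
polynomial representation, `D` corresponds exactly to the ideal of `Z₃[x]/(xⁿ - ε)`
generated by `f`. -/
def IsGenPolyZ (n : ℕ) (ε : ZMod 3) (D : Set (Fin n → ZMod 3))
    (f : Polynomial (ZMod 3)) : Prop :=
  f.Monic ∧ f ∣ (Polynomial.X ^ n - Polynomial.C ε) ∧
    {p | ∃ c ∈ D, p = mkZ n ε (toPolyZ c)} = ↑(Ideal.span {mkZ n ε f})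

namespace Statement12Aux

open R3

/-- Evaluation at `v = 0`. -/
def phi1 : R3 →+* ZMod 3 where
  toFun r := r.a
  map_one' := rfl
  map_mul' x y := rfl
  map_zero' := rfl
  map_add' x y := rfl

/-- Evaluation at `v = 1`. -/
def phi2 : R3 →+* ZMod 3 where
  toFun r := r.a + r.b + r.c
  map_one' := by simp
  map_mul' x y := by simp only [mul_a, mul_b, mul_c]; ring
  map_zero' := by simp
  map_add' x y := by simp only [add_a, add_b, add_c]; ring

private lemma phi3_key : ∀ a b c a' b' c' : ZMod 3,
    a * a' + 2 * (a * b' + b * a' + b * c' + c * b') +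
      (a * c' + c * a' + b * b' + c * c') =
    (a + 2 * b + c) * (a' + 2 * b' + c') := by decide

/-- Evaluation at `v = 2`. -/
def phi3 : R3 →+* ZMod 3 where
  toFun r := r.a + 2 * r.b + r.c
  map_one' := by simp
  map_mul' x y := by
    simp only [mul_a, mul_b, mul_c]
    have := phi3_key x.a x.b x.c y.a y.b y.c
    linear_combination this
  map_zero' := by simp
  map_add' x y := by simp only [add_a, add_b, add_c]; ring

@[simp] lemma phi1_iota (t : ZMod 3) : phi1 (iota t) = t := rfl
@[simp] lemma phi2_iota (t : ZMod 3) : phi2 (iota t) = t := by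
  show t + 0 + 0 = t; simp
@[simp] lemma phi3_iota (t : ZMod 3) : phi3 (iota t) = t := by
  show t + 2 * 0 + 0 = t; simp

private lemma ext_key : ∀ a b c a' b' c' : ZMod 3,
    a = a' → a + b + c = a' + b' + c' → a + 2 * b + c = a' + 2 * b' + c' →
      a = a' ∧ b = b' ∧ c = c' := by decide

/-- Two elements of `R3` agree iff they agree under the three evaluations. -/
lemma eq_iff_phi (x y : R3) :
    x = y ↔ phi1 x = phi1 y ∧ phi2 x = phi2 y ∧ phi3 x = phi3 y := by
  constructor
  · rintro rfl; exact ⟨rfl, rfl, rfl⟩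
  · rintro ⟨h1, h2, h3⟩
    obtain ⟨ha, hb, hc⟩ := ext_key x.a x.b x.c y.a y.b y.c h1 h2 h3
    ext <;> assumption

lemma eq_zero_iff_phi (x : R3) :
    x = 0 ↔ phi1 x = 0 ∧ phi2 x = 0 ∧ phi3 x = 0 := by
  simpa using eq_iff_phi x 0

@[simp] lemma phi1_e1 : phi1 e1 = 1 := by decide
@[simp] lemma phi1_e2 : phi1 e2 = 0 := by decide
@[simp] lemma phi1_e3 : phi1 e3 = 0 := by decide
@[simp] lemma phi2_e1 : phi2 e1 = 0 := by decide
@[simp] lemma phi2_e2 : phi2 e2 = 1 := by decide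
@[simp] lemma phi2_e3 : phi2 e3 = 0 := by decide
@[simp] lemma phi3_e1 : phi3 e1 = 0 := by decide
@[simp] lemma phi3_e2 : phi3 e2 = 0 := by decide
@[simp] lemma phi3_e3 : phi3 e3 = 1 := by decide

variable {n : ℕ}

/-- The three block projections of a vector over `R3`. -/
def Phi1 (w : Fin n → R3) : Fin n → ZMod 3 := fun i => phi1 (w i)
def Phi2 (w : Fin n → R3) : Fin n → ZMod 3 := fun i => phi2 (w i)
def Phi3 (w : Fin n → R3) : Fin n → ZMod 3 := fun i => phi3 (w i)

lemma combo_apply (x y z : Fin n → ZMod 3) (i : Fin n) :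
    (e1 • emb x + e2 • emb y + e3 • emb z) i =
      e1 * iota (x i) + e2 * iota (y i) + e3 * iota (z i) := rfl

lemma Phi1_combo (x y z : Fin n → ZMod 3) :
    Phi1 (e1 • emb x + e2 • emb y + e3 • emb z) = x := by
  funext i
  simp [Phi1, emb, combo_apply, map_add, map_mul]

lemma Phi2_combo (x y z : Fin n → ZMod 3) :
    Phi2 (e1 • emb x + e2 • emb y + e3 • emb z) = y := by
  funext i
  simp [Phi2, emb, combo_apply, map_add, map_mul]

lemma Phi3_combo (x y z : Fin n → ZMod 3) :
    Phi3 (e1 • emb x + e2 • emb y + e3 • emb z) = z := by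
  funext i
  simp [Phi3, emb, combo_apply, map_add, map_mul]

/-- Reconstruction: every vector over `R3` is the combination of its three projections. -/
lemma recon (w : Fin n → R3) :
    w = e1 • emb (Phi1 w) + e2 • emb (Phi2 w) + e3 • emb (Phi3 w) := by
  funext i
  rw [combo_apply]
  rw [eq_iff_phi]
  refine ⟨?_, ?_, ?_⟩ <;> simp [Phi1, Phi2, Phi3, map_add, map_mul]

/-- Membership characterization for `tri`. -/
lemma mem_tri {S₁ S₂ S₃ : Set (Fin n → ZMod 3)} {w : Fin n → R3} :
    w ∈ tri S₁ S₂ S₃ ↔ Phi1 w ∈ S₁ ∧ Phi2 w ∈ S₂ ∧ Phi3 w ∈ S₃ := by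
  constructor
  · rintro ⟨x, hx, y, hy, z, hz, rfl⟩
    rw [Phi1_combo, Phi2_combo, Phi3_combo]
    exact ⟨hx, hy, hz⟩
  · rintro ⟨h1, h2, h3⟩
    exact ⟨Phi1 w, h1, Phi2 w, h2, Phi3 w, h3, recon w⟩

lemma inner_eq_zero_iff (x y : Fin n → R3) :
    ∑ i, x i * y i = 0 ↔
      (∑ i, Phi1 x i * Phi1 y i = 0 ∧ ∑ i, Phi2 x i * Phi2 y i = 0 ∧
        ∑ i, Phi3 x i * Phi3 y i = 0) := by
  rw [eq_zero_iff_phi, map_sum, map_sum, map_sum]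
  simp only [map_mul]
  rfl

/-- Membership characterization for the dual. -/
lemma mem_dualR (C : Submodule R3 (Fin n → R3))
    (C₁ C₂ C₃ : Submodule (ZMod 3) (Fin n → ZMod 3))
    (hC : (C : Set (Fin n → R3)) = tri (C₁ : Set (Fin n → ZMod 3)) C₂ C₃)
    (w : Fin n → R3) :
    w ∈ dualR C ↔ Phi1 w ∈ dualZ C₁ ∧ Phi2 w ∈ dualZ C₂ ∧ Phi3 w ∈ dualZ C₃ := by
  constructor
  · intro h
    refine ⟨?_, ?_, ?_⟩
    · intro x hx
      have hu : (e1 • emb x + e2 • emb (0 : Fin n → ZMod 3) + e3 • emb 0) ∈ C := by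
        rw [← SetLike.mem_coe, hC]
        exact ⟨x, hx, 0, C₂.zero_mem, 0, C₃.zero_mem, rfl⟩
      have := (inner_eq_zero_iff w _).mp (h _ hu)
      rw [Phi1_combo] at this
      exact this.1
    · intro x hx
      have hu : (e1 • emb (0 : Fin n → ZMod 3) + e2 • emb x + e3 • emb 0) ∈ C := by
        rw [← SetLike.mem_coe, hC]
        exact ⟨0, C₁.zero_mem, x, hx, 0, C₃.zero_mem, rfl⟩
      have := (inner_eq_zero_iff w _).mp (h _ hu)
      rw [Phi2_combo] at this
      exact this.2.1
    · intro x hx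
      have hu : (e1 • emb (0 : Fin n → ZMod 3) + e2 • emb 0 + e3 • emb x) ∈ C := by
        rw [← SetLike.mem_coe, hC]
        exact ⟨0, C₁.zero_mem, 0, C₂.zero_mem, x, hx, rfl⟩
      have := (inner_eq_zero_iff w _).mp (h _ hu)
      rw [Phi3_combo] at this
      exact this.2.2
  · rintro ⟨h1, h2, h3⟩ y hy
    rw [← SetLike.mem_coe, hC] at hy
    obtain ⟨x, hx, yy, hyy, z, hz, rfl⟩ := hy
    rw [inner_eq_zero_iff, Phi1_combo, Phi2_combo, Phi3_combo]
    exact ⟨h1 x hx, h2 yy hyy, h3 z hz⟩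

end Statement12Aux

/-- If `C = (1+2v²)C₁ ⊕ (2v+2v²)C₂ ⊕ (v+2v²)C₃` is a linear code over
`R` with associated ternary codes `C₁, C₂, C₃`, then
`C^⊥ = (1+2v²)C₁^⊥ ⊕ (2v+2v²)C₂^⊥ ⊕ (v+2v²)C₃^⊥`, and `C` is self-dual iff `C₁`,
`C₂` and `C₃` are self-dual. -/
theorem statement12 (n : ℕ) (C : Submodule R3 (Fin n → R3))
    (C₁ C₂ C₃ : Submodule (ZMod 3) (Fin n → ZMod 3))
    (hA₁ : (C₁ : Set (Fin n → ZMod 3)) = assoc1 (C : Set (Fin n → R3)))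
    (hA₂ : (C₂ : Set (Fin n → ZMod 3)) = assoc2 (C : Set (Fin n → R3)))
    (hA₃ : (C₃ : Set (Fin n → ZMod 3)) = assoc3 (C : Set (Fin n → R3)))
    (hC : (C : Set (Fin n → R3)) = tri (C₁ : Set (Fin n → ZMod 3)) C₂ C₃) :
    (dualR C : Set (Fin n → R3)) =
      tri (dualZ C₁ : Set (Fin n → ZMod 3)) (dualZ C₂) (dualZ C₃) ∧
    (C = dualR C ↔ (C₁ = dualZ C₁ ∧ C₂ = dualZ C₂ ∧ C₃ = dualZ C₃)) := by
  open Statement12Aux in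
  have hdual : (dualR C : Set (Fin n → R3)) =
      tri (dualZ C₁ : Set (Fin n → ZMod 3)) (dualZ C₂) (dualZ C₃) := by
    ext w
    rw [SetLike.mem_coe, mem_dualR C C₁ C₂ C₃ hC w, mem_tri]
    rfl
  refine ⟨hdual, ?_, ?_⟩
  · -- self-dual implies the three ternary codes are self-dual
    intro hsd
    have hset : tri (C₁ : Set (Fin n → ZMod 3)) C₂ C₃ =
        tri (dualZ C₁ : Set (Fin n → ZMod 3)) (dualZ C₂) (dualZ C₃) := by
      rw [← hC, ← hdual]; exact congrArg _ hsd
    refine ⟨?_, ?_, ?_⟩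
    · ext x
      constructor
      · intro hx
        have hw : (e1 • emb x + e2 • emb (0 : Fin n → ZMod 3) + e3 • emb 0) ∈
            tri (C₁ : Set (Fin n → ZMod 3)) C₂ C₃ :=
          ⟨x, hx, 0, C₂.zero_mem, 0, C₃.zero_mem, rfl⟩
        rw [hset, mem_tri] at hw
        simpa [Phi1_combo] using hw.1
      · intro hx
        have hw : (e1 • emb x + e2 • emb (0 : Fin n → ZMod 3) + e3 • emb 0) ∈
            tri (dualZ C₁ : Set (Fin n → ZMod 3)) (dualZ C₂) (dualZ C₃) :=
          ⟨x, hx, 0, (dualZ C₂).zero_mem, 0, (dualZ C₃).zero_mem, rfl⟩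
        rw [← hset, mem_tri] at hw
        simpa [Phi1_combo] using hw.1
    · ext x
      constructor
      · intro hx
        have hw : (e1 • emb (0 : Fin n → ZMod 3) + e2 • emb x + e3 • emb 0) ∈
            tri (C₁ : Set (Fin n → ZMod 3)) C₂ C₃ :=
          ⟨0, C₁.zero_mem, x, hx, 0, C₃.zero_mem, rfl⟩
        rw [hset, mem_tri] at hw
        simpa [Phi2_combo] using hw.2.1
      · intro hx
        have hw : (e1 • emb (0 : Fin n → ZMod 3) + e2 • emb x + e3 • emb 0) ∈
            tri (dualZ C₁ : Set (Fin n → ZMod 3)) (dualZ C₂) (dualZ C₃) :=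
          ⟨0, (dualZ C₁).zero_mem, x, hx, 0, (dualZ C₃).zero_mem, rfl⟩
        rw [← hset, mem_tri] at hw
        simpa [Phi2_combo] using hw.2.1
    · ext x
      constructor
      · intro hx
        have hw : (e1 • emb (0 : Fin n → ZMod 3) + e2 • emb 0 + e3 • emb x) ∈
            tri (C₁ : Set (Fin n → ZMod 3)) C₂ C₃ :=
          ⟨0, C₁.zero_mem, 0, C₂.zero_mem, x, hx, rfl⟩
        rw [hset, mem_tri] at hw
        simpa [Phi3_combo] using hw.2.2
      · intro hx
        have hw : (e1 • emb (0 : Fin n → ZMod 3) + e2 • emb 0 + e3 • emb x) ∈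
            tri (dualZ C₁ : Set (Fin n → ZMod 3)) (dualZ C₂) (dualZ C₃) :=
          ⟨0, (dualZ C₁).zero_mem, 0, (dualZ C₂).zero_mem, x, hx, rfl⟩
        rw [← hset, mem_tri] at hw
        simpa [Phi3_combo] using hw.2.2
  · rintro ⟨h1, h2, h3⟩
    apply SetLike.coe_injective
    rw [hC, hdual, ← h1, ← h2, ← h3]
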